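/- If P is odd, n is odd with n ≥ 3, and Q ≡ 2 (mod 4), then U_n(P,Q) ≡ 3 (mod 4); in particular U_n(P,Q) is not a perfect square. -/
import Mathlib


def lucasU (P Q : ℤ) : ℕ → ℤ
  | 0 => 0
  | 1 => 1
  | (n + 2) => P * lucasU P Q (n + 1) - Q * lucasU P Q n

lemma lucasU_mod4 (P Q : ℤ) (hP : Odd P) (hQ4 : Q % 4 = 2) (k : ℕ) :
    ((lucasU P Q (2 * k + 2) : ZMod 4) = (P : ZMod 4)) ∧
      ((lucasU P Q (2 * k + 3) : ZMod 4) = 3) := by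
  have hQ : (Q : ZMod 4) = 2 := by
    have := (ZMod.intCast_eq_intCast_iff Q 2 4).mpr (by unfold Int.ModEq; omega)
    simpa using this
  have hP2 : (P : ZMod 4) ^ 2 = 1 := by
    obtain ⟨m, hm⟩ := hP
    rw [hm]; push_cast; ring_nf
    simp [show (4 : ZMod 4) = 0 by decide]
  induction k with
  | zero =>
      constructor
      · show ((lucasU P Q 2 : ℤ) : ZMod 4) = _
        simp [lucasU, hQ]
      · show ((lucasU P Q 3 : ℤ) : ZMod 4) = _
        have : lucasU P Q 3 = P * P - Q := by simp [lucasU]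
        rw [this]; push_cast [hQ]
        have : (P : ZMod 4) * P = 1 := by rw [← sq]; exact hP2
        rw [this]; decide
  | succ k ih =>
      obtain ⟨h1, h2⟩ := ih
      have e1 : lucasU P Q (2 * (k + 1) + 2) =
          P * lucasU P Q (2 * k + 3) - Q * lucasU P Q (2 * k + 2) := by
        show lucasU P Q ((2 * k + 2) + 2) = _
        rfl
      have e2 : lucasU P Q (2 * (k + 1) + 3) =
          P * lucasU P Q (2 * (k + 1) + 2) - Q * lucasU P Q (2 * k + 3) := by
        show lucasU P Q ((2 * k + 3) + 2) = _
        rfl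
      have c1 : ((lucasU P Q (2 * (k + 1) + 2) : ℤ) : ZMod 4) = (P : ZMod 4) := by
        rw [e1]; push_cast [hQ, h1, h2]; ring
      refine ⟨c1, ?_⟩
      rw [e2]; push_cast [hQ, h2, c1]
      have : (P : ZMod 4) * P = 1 := by rw [← sq]; exact hP2
      rw [this]; decide

theorem stmt3 (P Q : ℤ) (n : ℕ) (hP : Odd P) (hn : Odd n) (hn3 : 3 ≤ n)
    (hQ4 : Q % 4 = 2) :
    lucasU P Q n ≡ 3 [ZMOD 4] ∧ ¬ ∃ k : ℤ, lucasU P Q n = k ^ 2 := by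
  obtain ⟨m, hm⟩ := hn
  have hk : ∃ k, n = 2 * k + 3 := ⟨m - 1, by omega⟩
  obtain ⟨k, rfl⟩ := hk
  have h3 := (lucasU_mod4 P Q hP hQ4 k).2
  have hmod : lucasU P Q (2 * k + 3) ≡ 3 [ZMOD 4] := by
    have := (ZMod.intCast_eq_intCast_iff (lucasU P Q (2 * k + 3)) 3 4).mp
    apply this
    rw [h3]; decide
  refine ⟨hmod, ?_⟩
  rintro ⟨j, hj⟩
  have : ((j : ZMod 4) ^ 2) = 3 := by
    rw [← h3, hj]; push_cast; ring
  have hjj : ∀ x : ZMod 4, x ^ 2 ≠ 3 := by decide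
  exact hjj _ this
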